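/- Let M be a compact Riemannian manifold, φ ∈ Diff¹(M), ω ∈ C¹(M, ℝ^d), F ∈ C¹(D_N × D_d, D_N) with D_N ⊆ ℝ^N, D_d ⊆ ℝ^d open, ω(M) ⊆ D_d, W ⊆ D_N with F(W × ω(M)) ⊆ W. Set L_{F_x} := sup over W × ω(M) of ‖D_x F‖ and L_{F_z} := sup over W × ω(M) of ‖D_z F‖, and assume both are finite and L_{F_x}‖Tφ^{−1}‖_∞ < 1. Then for any R > L_{F_z}‖Dω‖_∞ / (1 − L_{F_x}‖Tφ^{−1}‖_∞), the map Ψ(f)(m) := F(f(φ^{−1}(m)), ω(m)) maps Ω(R, W) := {f ∈ C¹(M, W) : ‖Df‖_∞ ≤ R} into itself. -/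

import Mathlib

open Manifold

private theorem hasMFDerivAt_prod_space {𝕜 : Type*} [NontriviallyNormedField 𝕜]
    {E : Type*} [NormedAddCommGroup E] [NormedSpace 𝕜 E]
    {H : Type*} [TopologicalSpace H] {I : ModelWithCorners 𝕜 E H}
    {M : Type*} [TopologicalSpace M] [ChartedSpace H M]
    {E' : Type*} [NormedAddCommGroup E'] [NormedSpace 𝕜 E']
    {E'' : Type*} [NormedAddCommGroup E''] [NormedSpace 𝕜 E'']
    {f : M → E'} {g : M → E''} {x : M}
    {f' : TangentSpace I x →L[𝕜] E'} {g' : TangentSpace I x →L[𝕜] E''}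
    (hf : HasMFDerivAt I 𝓘(𝕜, E') f x f') (hg : HasMFDerivAt I 𝓘(𝕜, E'') g x g') :
    HasMFDerivAt I 𝓘(𝕜, E' × E'') (fun y => (f y, g y)) x (f'.prod g') :=
  ⟨hf.1.prodMk hg.1, HasFDerivWithinAt.prodMk hf.2 hg.2⟩

private theorem aux_comp_bound {E₀ E₁ E₂ : Type*}
    [NormedAddCommGroup E₀] [NormedSpace ℝ E₀]
    [NormedAddCommGroup E₁] [NormedSpace ℝ E₁]
    [NormedAddCommGroup E₂] [NormedSpace ℝ E₂]
    (A : E₁ →L[ℝ] E₂) (B : E₀ →L[ℝ] E₁) {a b : ℝ}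
    (hA : ‖A‖ ≤ a) (hB : ‖B‖ ≤ b) : ‖A.comp B‖ ≤ a * b := by
  refine le_trans (A.opNorm_comp_le B) ?_
  have h0A : (0:ℝ) ≤ ‖A‖ := norm_nonneg _
  have h0B : (0:ℝ) ≤ ‖B‖ := norm_nonneg _
  nlinarith

private theorem aux_bound {E₀ E₁ E₂ E₃ : Type*}
    [NormedAddCommGroup E₀] [NormedSpace ℝ E₀]
    [NormedAddCommGroup E₁] [NormedSpace ℝ E₁]
    [NormedAddCommGroup E₂] [NormedSpace ℝ E₂]
    [NormedAddCommGroup E₃] [NormedSpace ℝ E₃]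
    (L : E₁ × E₂ →L[ℝ] E₃) (Lx : E₁ →L[ℝ] E₃) (Lz : E₂ →L[ℝ] E₃)
    (hsplit : ∀ a b, L (a, b) = Lx a + Lz b)
    (P : E₀ →L[ℝ] E₁) (Q : E₀ →L[ℝ] E₂)
    {cx cz p qn R : ℝ}
    (hLx : ‖Lx‖ ≤ cx) (hLz : ‖Lz‖ ≤ cz) (hP : ‖P‖ ≤ p) (hQ : ‖Q‖ ≤ qn)
    (hfin : cx * p + cz * qn ≤ R) :
    ‖L.comp (P.prod Q)‖ ≤ R := by
  have h0Lx : (0:ℝ) ≤ ‖Lx‖ := norm_nonneg _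
  have h0Lz : (0:ℝ) ≤ ‖Lz‖ := norm_nonneg _
  have h0P : (0:ℝ) ≤ ‖P‖ := norm_nonneg _
  have h0Q : (0:ℝ) ≤ ‖Q‖ := norm_nonneg _
  have hcx : (0:ℝ) ≤ cx := le_trans h0Lx hLx
  have hcz : (0:ℝ) ≤ cz := le_trans h0Lz hLz
  have hp : (0:ℝ) ≤ p := le_trans h0P hP
  have hq : (0:ℝ) ≤ qn := le_trans h0Q hQ
  have hR0 : (0:ℝ) ≤ R := le_trans (by positivity) hfin
  refine le_trans (ContinuousLinearMap.opNorm_le_bound _ (by positivity) fun v => ?_)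
    hfin
  have hv : (L.comp (P.prod Q)) v = Lx (P v) + Lz (Q v) := by
    rw [ContinuousLinearMap.comp_apply, ContinuousLinearMap.prod_apply]
    exact hsplit _ _
  rw [hv]
  have h1 : ‖Lx (P v)‖ ≤ cx * (p * ‖v‖) := by
    refine le_trans (Lx.le_opNorm _) ?_
    have h2 : ‖P v‖ ≤ p * ‖v‖ := by
      refine le_trans (P.le_opNorm _) ?_
      nlinarith [norm_nonneg v]
    nlinarith [norm_nonneg (P v), norm_nonneg v]
  have h2 : ‖Lz (Q v)‖ ≤ cz * (qn * ‖v‖) := by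
    refine le_trans (Lz.le_opNorm _) ?_
    have h3 : ‖Q v‖ ≤ qn * ‖v‖ := by
      refine le_trans (Q.le_opNorm _) ?_
      nlinarith [norm_nonneg v]
    nlinarith [norm_nonneg (Q v), norm_nonneg v]
  calc ‖Lx (P v) + Lz (Q v)‖ ≤ ‖Lx (P v)‖ + ‖Lz (Q v)‖ := norm_add_le _ _
    _ ≤ cx * (p * ‖v‖) + cz * (qn * ‖v‖) := add_le_add h1 h2
    _ = (cx * p + cz * qn) * ‖v‖ := by ring


set_option maxHeartbeats 1000000 in
/-- under the curvature-free bounds `L_{F_x}‖Tφ⁻¹‖_∞ < 1` and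
`R > L_{F_z}‖Dω‖_∞ / (1 − L_{F_x}‖Tφ⁻¹‖_∞)`, the map
`Ψ(f)(m) := F (f (φ⁻¹ m)) (ω m)` maps `Ω(R,W)` into itself. -/
theorem stmt12 {q N d : ℕ} {M : Type*} [TopologicalSpace M]
    [ChartedSpace (EuclideanSpace ℝ (Fin q)) M] [IsManifold (𝓡 q) (⊤ : ℕ∞) M]
    [CompactSpace M]
    (φ : M ≃ₜ M) (hφ : ContMDiff (𝓡 q) (𝓡 q) 1 φ)
    (hφinv : ContMDiff (𝓡 q) (𝓡 q) 1 φ.symm)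
    (ω : M → EuclideanSpace ℝ (Fin d))
    (hω : ContMDiff (𝓡 q) (𝓘(ℝ, EuclideanSpace ℝ (Fin d))) 1 ω)
    (DN : Set (EuclideanSpace ℝ (Fin N))) (Dd : Set (EuclideanSpace ℝ (Fin d)))
    (hDN : IsOpen DN) (hDd : IsOpen Dd)
    (F : EuclideanSpace ℝ (Fin N) → EuclideanSpace ℝ (Fin d) → EuclideanSpace ℝ (Fin N))
    (hF : ContDiffOn ℝ 1
      (fun p : EuclideanSpace ℝ (Fin N) × EuclideanSpace ℝ (Fin d) => F p.1 p.2) (DN ×ˢ Dd))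
    (W : Set (EuclideanSpace ℝ (Fin N))) (hWDN : W ⊆ DN) (hωDd : ∀ m, ω m ∈ Dd)
    (hinv : ∀ x ∈ W, ∀ m : M, F x (ω m) ∈ W)
    (LFx LFz nTφinv nDω R : ℝ)
    (hLFx : ∀ x ∈ W, ∀ m : M, ‖fderiv ℝ (fun x' => F x' (ω m)) x‖ ≤ LFx)
    (hLFz : ∀ x ∈ W, ∀ m : M, ‖fderiv ℝ (fun z' => F x z') (ω m)‖ ≤ LFz)
    (hnTφinv : ∀ m : M, @Norm.norm (EuclideanSpace ℝ (Fin q) →L[ℝ] EuclideanSpace ℝ (Fin q)) _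
      (mfderiv (𝓡 q) (𝓡 q) φ.symm m) ≤ nTφinv)
    (hnDω : ∀ m : M, @Norm.norm (EuclideanSpace ℝ (Fin q) →L[ℝ] EuclideanSpace ℝ (Fin d)) _
      (mfderiv (𝓡 q) (𝓘(ℝ, EuclideanSpace ℝ (Fin d))) ω m) ≤ nDω)
    (hsmall : LFx * nTφinv < 1)
    (hR : LFz * nDω / (1 - LFx * nTφinv) < R)
    (f : M → EuclideanSpace ℝ (Fin N))
    (hf : ContMDiff (𝓡 q) (𝓘(ℝ, EuclideanSpace ℝ (Fin N))) 1 f)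
    (hfW : ∀ m, f m ∈ W)
    (hfD : ∀ m, @Norm.norm (EuclideanSpace ℝ (Fin q) →L[ℝ] EuclideanSpace ℝ (Fin N)) _
      (mfderiv (𝓡 q) (𝓘(ℝ, EuclideanSpace ℝ (Fin N))) f m) ≤ R) :
    ContMDiff (𝓡 q) (𝓘(ℝ, EuclideanSpace ℝ (Fin N))) 1 (fun m => F (f (φ.symm m)) (ω m)) ∧
    (∀ m, F (f (φ.symm m)) (ω m) ∈ W) ∧
    ∀ m, @Norm.norm (EuclideanSpace ℝ (Fin q) →L[ℝ] EuclideanSpace ℝ (Fin N)) _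
      (mfderiv (𝓡 q) (𝓘(ℝ, EuclideanSpace ℝ (Fin N)))
      (fun m' => F (f (φ.symm m')) (ω m')) m) ≤ R := by
  have hu : ContMDiff (𝓡 q) 𝓘(ℝ, EuclideanSpace ℝ (Fin N) × EuclideanSpace ℝ (Fin d)) 1
      (fun m => (f (φ.symm m), ω m)) := (hf.comp hφinv).prodMk_space hω
  have humem : ∀ m : M, (f (φ.symm m), ω m) ∈ DN ×ˢ Dd := fun m => ⟨hWDN (hfW _), hωDd m⟩
  have hcont : ContMDiff (𝓡 q) 𝓘(ℝ, EuclideanSpace ℝ (Fin N)) 1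
      (fun m => F (f (φ.symm m)) (ω m)) := hF.contMDiffOn.comp_contMDiff hu humem
  refine ⟨hcont, fun m => hinv _ (hfW _) m, fun m => ?_⟩
  have hφd : HasMFDerivAt (𝓡 q) (𝓡 q) φ.symm m (mfderiv (𝓡 q) (𝓡 q) φ.symm m) :=
    ((hφinv m).mdifferentiableAt one_ne_zero).hasMFDerivAt
  have hfd := ((hf (φ.symm m)).mdifferentiableAt one_ne_zero).hasMFDerivAt
  have hωd := ((hω m).mdifferentiableAt one_ne_zero).hasMFDerivAt
  set A := mfderiv (𝓡 q) 𝓘(ℝ, EuclideanSpace ℝ (Fin N)) f (φ.symm m) with hAdef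
  set B := mfderiv (𝓡 q) (𝓡 q) φ.symm m with hBdef
  set Q := mfderiv (𝓡 q) 𝓘(ℝ, EuclideanSpace ℝ (Fin d)) ω m with hQdef
  have hgd : HasMFDerivAt (𝓡 q) 𝓘(ℝ, EuclideanSpace ℝ (Fin N)) (fun m' => f (φ.symm m')) m
      (A.comp B) := hfd.comp m hφd
  have hud : HasMFDerivAt (𝓡 q) 𝓘(ℝ, EuclideanSpace ℝ (Fin N) × EuclideanSpace ℝ (Fin d))
      (fun m' => (f (φ.symm m'), ω m')) m ((A.comp B).prod Q) :=
    hasMFDerivAt_prod_space hgd hωd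
  have hFd : DifferentiableAt ℝ
      (fun p : EuclideanSpace ℝ (Fin N) × EuclideanSpace ℝ (Fin d) => F p.1 p.2)
      (f (φ.symm m), ω m) :=
    (hF.differentiableOn one_ne_zero).differentiableAt ((hDN.prod hDd).mem_nhds (humem m))
  set L := fderiv ℝ
      (fun p : EuclideanSpace ℝ (Fin N) × EuclideanSpace ℝ (Fin d) => F p.1 p.2)
      (f (φ.symm m), ω m) with hLdef
  have hcompd : HasMFDerivAt (𝓡 q) 𝓘(ℝ, EuclideanSpace ℝ (Fin N))
      (fun m' => F (f (φ.symm m')) (ω m')) m (L.comp ((A.comp B).prod Q)) :=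
    (hFd.hasFDerivAt.hasMFDerivAt).comp m hud
  rw [hcompd.mfderiv]
  set Lx := L.comp (ContinuousLinearMap.inl ℝ (EuclideanSpace ℝ (Fin N))
    (EuclideanSpace ℝ (Fin d))) with hLxdef
  set Lz := L.comp (ContinuousLinearMap.inr ℝ (EuclideanSpace ℝ (Fin N))
    (EuclideanSpace ℝ (Fin d))) with hLzdef
  have hLxval : fderiv ℝ (fun x' => F x' (ω m)) (f (φ.symm m)) = Lx := by
    have := (hFd.hasFDerivAt.comp (f (φ.symm m))
      (hasFDerivAt_prodMk_left (𝕜 := ℝ) (f (φ.symm m)) (ω m))).fderiv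
    exact this
  have hLzval : fderiv ℝ (fun z' => F (f (φ.symm m)) z') (ω m) = Lz := by
    have := (hFd.hasFDerivAt.comp (ω m)
      (hasFDerivAt_prodMk_right (𝕜 := ℝ) (f (φ.symm m)) (ω m))).fderiv
    exact this
  have hLxb : ‖Lx‖ ≤ LFx := by rw [← hLxval]; exact hLFx _ (hfW _) m
  have hLzb : ‖Lz‖ ≤ LFz := by rw [← hLzval]; exact hLFz _ (hfW _) m
  have hsplit : ∀ (a : EuclideanSpace ℝ (Fin N)) (b : EuclideanSpace ℝ (Fin d)),
      L (a, b) = Lx a + Lz b := by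
    intro a b
    rw [hLxdef, hLzdef]
    simp only [ContinuousLinearMap.comp_apply, ContinuousLinearMap.inl_apply,
      ContinuousLinearMap.inr_apply]
    rw [← map_add]
    congr 1
    simp [Prod.mk_add_mk]
  set A' : EuclideanSpace ℝ (Fin q) →L[ℝ] EuclideanSpace ℝ (Fin N) := A with hA'def
  set B' : EuclideanSpace ℝ (Fin q) →L[ℝ] EuclideanSpace ℝ (Fin q) := B with hB'def
  set Q' : EuclideanSpace ℝ (Fin q) →L[ℝ] EuclideanSpace ℝ (Fin d) := Q with hQ'def
  have hA : ‖A'‖ ≤ R := hfD _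
  have hB : ‖B'‖ ≤ nTφinv := hnTφinv m
  have hQn : ‖Q'‖ ≤ nDω := hnDω m
  have hAB : ‖A'.comp B'‖ ≤ R * nTφinv := aux_comp_bound A' B' hA hB
  have hLFx0 : (0:ℝ) ≤ LFx := le_trans (norm_nonneg _) hLxb
  have hLFz0 : (0:ℝ) ≤ LFz := le_trans (norm_nonneg _) hLzb
  have hnT0 : (0:ℝ) ≤ nTφinv := le_trans (norm_nonneg B') hB
  have hnD0 : (0:ℝ) ≤ nDω := le_trans (norm_nonneg Q') hQn
  have hden : (0:ℝ) < 1 - LFx * nTφinv := by linarith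
  have hkey : LFz * nDω < R * (1 - LFx * nTφinv) := by
    have := (div_lt_iff₀ hden).mp hR
    linarith
  have hfin : LFx * (R * nTφinv) + LFz * nDω ≤ R := by nlinarith
  have final : ‖L.comp ((A'.comp B').prod Q')‖ ≤ R :=
    aux_bound L Lx Lz hsplit (A'.comp B') Q' hLxb hLzb hAB hQn hfin
  exact final
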